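/- Let R = {(f₁, f₂, f₃) ∈ ℂ[x]³ : x | fᵢ - fⱼ for all i,j, and x² | f₁ - 2f₂ + f₃}. Then R is a free ℂ[x]-module of rank 3. -/

import Mathlib

open Polynomial

noncomputable def vv6 : Fin 3 → Fin 3 → Polynomial ℂ := fun i j =>
  match i, j with
  | 0, _ => 1
  | 1, 0 => 0
  | 1, 1 => X
  | 1, 2 => 2 * X
  | 2, 0 => 0
  | 2, 1 => 0
  | 2, 2 => 2 * X ^ 2

noncomputable def Nsub6 : Submodule (Polynomial ℂ) (Fin 3 → Polynomial ℂ) where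
  carrier := {f : Fin 3 → Polynomial ℂ |
      (∀ i j : Fin 3, X ∣ f i - f j) ∧ X ^ 2 ∣ f 0 - 2 * f 1 + f 2}
  zero_mem' := ⟨fun i j => by simp, by simp⟩
  add_mem' := fun {a b} ha hb => by
    refine ⟨fun i j => ?_, ?_⟩
    · have h := dvd_add (ha.1 i j) (hb.1 i j)
      have e : (a + b) i - (a + b) j = (a i - a j) + (b i - b j) := by
        simp [Pi.add_apply]; ring
      rwa [e]
    · have h := dvd_add ha.2 hb.2
      have e : (a + b) 0 - 2 * (a + b) 1 + (a + b) 2 =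
          (a 0 - 2 * a 1 + a 2) + (b 0 - 2 * b 1 + b 2) := by
        simp [Pi.add_apply]; ring
      rwa [e]
  smul_mem' := fun c f hf => by
    refine ⟨fun i j => ?_, ?_⟩
    · have h := (hf.1 i j).mul_left c
      have e : (c • f) i - (c • f) j = c * (f i - f j) := by
        simp [Pi.smul_apply, smul_eq_mul]; ring
      rwa [e]
    · have h := hf.2.mul_left c
      have e : (c • f) 0 - 2 * (c • f) 1 + (c • f) 2 =
          c * (f 0 - 2 * f 1 + f 2) := by
        simp [Pi.smul_apply, smul_eq_mul]; ring
      rwa [e]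

theorem hli6 : LinearIndependent (Polynomial ℂ) vv6 := by
  rw [Fintype.linearIndependent_iff]
  intro g hg
  have h0 := congrFun hg 0
  have h1 := congrFun hg 1
  have h2 := congrFun hg 2
  simp [vv6, Fin.sum_univ_three, Pi.smul_apply, smul_eq_mul] at h0 h1 h2
  have hg0 : g 0 = 0 := h0
  rw [hg0, zero_add] at h1 h2
  have hX : (X : Polynomial ℂ) ≠ 0 := X_ne_zero
  have hg1 : g 1 = 0 := by
    rcases mul_eq_zero.mp h1 with h | h
    · exact h
    · exact absurd h hX
  rw [hg1, zero_mul, zero_add] at h2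
  have hg2 : g 2 = 0 := by
    rcases mul_eq_zero.mp h2 with h | h
    · exact h
    · exact absurd h (mul_ne_zero two_ne_zero (pow_ne_zero 2 hX))
  intro i; fin_cases i <;> assumption

theorem hC6 : (C (1/2 : ℂ) * 2 : Polynomial ℂ) = 1 := by
  rw [show (2 : Polynomial ℂ) = C 2 from (map_ofNat C 2).symm, ← C_mul]
  norm_num

theorem hrow1 : ∀ k : Fin 3, X ∣ vv6 1 k := by
  intro k; fin_cases k
  · exact dvd_zero _
  · exact dvd_rfl
  · exact ⟨2, by show (2 : Polynomial ℂ) * X = X * 2; ring⟩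

theorem hrow2 : ∀ k : Fin 3, X ∣ vv6 2 k := by
  intro k; fin_cases k
  · exact dvd_zero _
  · exact dvd_zero _
  · exact ⟨2 * X, by show (2 : Polynomial ℂ) * X ^ 2 = X * (2 * X); ring⟩

theorem hspan6 : Submodule.span (Polynomial ℂ) (Set.range vv6) = Nsub6 := by
  apply le_antisymm
  · rw [Submodule.span_le]
    rintro _ ⟨i, rfl⟩
    fin_cases i
    · refine ⟨fun i j => ?_, ?_⟩
      · fin_cases i <;> fin_cases j <;> simp [vv6]
      · exact ⟨0, by show (1 : Polynomial ℂ) - 2 * 1 + 1 = X ^ 2 * 0; ring⟩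
    · refine ⟨fun i j => dvd_sub (hrow1 i) (hrow1 j), ?_⟩
      exact ⟨0, by show (0 : Polynomial ℂ) - 2 * X + 2 * X = X ^ 2 * 0; ring⟩
    · refine ⟨fun i j => dvd_sub (hrow2 i) (hrow2 j), ?_⟩
      exact ⟨2, by show (0 : Polynomial ℂ) - 2 * 0 + 2 * X ^ 2 = X ^ 2 * 2; ring⟩
  · rintro f ⟨h1, h2⟩
    obtain ⟨g, hg⟩ := h1 1 0
    obtain ⟨h, hh⟩ := h2
    have key : f = f 0 • vv6 0 + g • vv6 1 + (C (1/2 : ℂ) * h) • vv6 2 := by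
      funext k
      have hf1 : f 1 = f 0 + X * g := by linear_combination hg
      have hf2 : f 2 = f 0 + 2 * X * g + X ^ 2 * h := by
        linear_combination hh + 2 * hg
      fin_cases k <;>
        simp only [vv6, Pi.add_apply, Pi.smul_apply, smul_eq_mul]
      · show f 0 = _
        ring
      · show f 1 = _
        linear_combination hf1
      · show f 2 = _
        linear_combination hf2 - X ^ 2 * h * hC6
    rw [key]
    refine Submodule.add_mem _ (Submodule.add_mem _ ?_ ?_) ?_ <;>
      exact Submodule.smul_mem _ _ (Submodule.subset_span ⟨_, rfl⟩)

theorem stmt_6 :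
    ∃ N : Submodule (Polynomial ℂ) (Fin 3 → Polynomial ℂ),
      (N : Set (Fin 3 → Polynomial ℂ)) =
        {f : Fin 3 → Polynomial ℂ |
          (∀ i j : Fin 3, X ∣ f i - f j) ∧
          X ^ 2 ∣ f 0 - 2 * f 1 + f 2} ∧
      Nonempty (Module.Basis (Fin 3) (Polynomial ℂ) N) := by
  exact ⟨Nsub6, rfl, ⟨(Module.Basis.span hli6).map (LinearEquiv.ofEq _ _ hspan6)⟩⟩
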